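/- Let a be a single letter, let L ⊆ {a}* be any language over the one-letter alphabet {a}, and let θ ∈ (0, 2]. Then the isometry group Isom_θ(L) has at most two elements; in particular, it is either trivial or isomorphic to the cyclic group of order 2. -/

import Mathlib

namespace Levenshtein

/-- A cost structure for Levenshtein edit distance (as in the older Mathlib). -/
structure Cost (α β δ : Type*) where
  delete : α → δ
  insert : β → δ
  substitute : α → β → δ

/-- Helper for `suffixLevenshtein` (as in the older Mathlib). -/
def impl {α β δ : Type*} [AddZeroClass δ] [Min δ] (C : Cost α β δ) (xs : List α) (y : β)
    (d : {r : List δ // 0 < r.length}) : {r : List δ // 0 < r.length} :=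
  let ⟨ds, w⟩ := d
  xs.zip (ds.zip ds.tail) |>.foldr
    (init := ⟨[C.insert y + ds.getLast (List.length_pos_iff.mp w)], by simp⟩)
    (fun ⟨x, d₀, d₁⟩ ⟨r, w⟩ =>
      ⟨min (C.delete x + r[0]) (min (C.insert y + d₀) (C.substitute x y + d₁)) :: r, by simp⟩)

end Levenshtein

/-- `suffixLevenshtein C xs ys` computes the Levenshtein distance from each suffix of `xs`
to `ys` (as in the older Mathlib). -/
def suffixLevenshtein {α β δ : Type*} [AddZeroClass δ] [Min δ] (C : Levenshtein.Cost α β δ)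
    (xs : List α) (ys : List β) : {r : List δ // 0 < r.length} :=
  ys.foldr
    (fun y dists => Levenshtein.impl C xs y dists)
    (xs.foldr (init := ⟨[0], by simp⟩)
      (fun a ⟨ds, w⟩ => ⟨(C.delete a + ds[0]) :: ds, by simp⟩))

/-- The Levenshtein distance (as in the older Mathlib). -/
def levenshtein {α β δ : Type*} [AddZeroClass δ] [Min δ] (C : Levenshtein.Cost α β δ)
    (xs : List α) (ys : List β) : δ :=
  let ⟨r, w⟩ := suffixLevenshtein C xs ys
  r[0]

/-- Cost structure for the generalized Levenshtein distance:
insertions and deletions cost `γ`, substitutions cost `θ`. -/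
def levCost (A : Type*) [DecidableEq A] (γ θ : ℝ) : Levenshtein.Cost A A ℝ where
  delete _ := γ
  insert _ := γ
  substitute a b := if a = b then 0 else θ

/-- The generalized Levenshtein distance `lev_{γ,θ}` between two words over `A`:
the minimal total cost of transforming one word into the other by insertions and
deletions (of cost `γ`) and substitutions (of cost `θ`). -/
def lev {A : Type*} [DecidableEq A] (γ θ : ℝ) (u v : List A) : ℝ :=
  levenshtein (levCost A γ θ) u v

/-- The isometry group of a language `L ⊆ A*` with respect to a distance `d` on `A*`:
the group (under composition) of bijections of `L` preserving `d`. -/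
def IsomGroup {A : Type*} (d : List A → List A → ℝ) (L : Set (List A)) :
    Subgroup (Equiv.Perm L) where
  carrier := {φ : Equiv.Perm L | ∀ u v : L, d (φ u) (φ v) = d u v}
  one_mem' := by intro u v; rfl
  mul_mem' := by intro φ ψ hφ hψ u v; simp only [Equiv.Perm.mul_apply]; rw [hφ, hψ]
  inv_mem' := by
    intro φ hφ u v
    have h := hφ (φ⁻¹ u) (φ⁻¹ v)
    simpa using h.symm

section LevAux
variable {α β δ : Type*} [AddZeroClass δ] [Min δ] (C : Levenshtein.Cost α β δ)

theorem impl_length (xs : List α) (y : β) (d : {r : List δ // 0 < r.length})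
    (w : d.1.length = xs.length + 1) :
    (Levenshtein.impl C xs y d).1.length = xs.length + 1 := by
  induction xs generalizing d with
  | nil => rfl
  | cons x xs ih =>
    dsimp [Levenshtein.impl]
    match d, w with
    | ⟨d₁ :: d₂ :: ds, _⟩, w =>
      dsimp
      congr 1
      exact ih ⟨d₂ :: ds, by simp⟩ (by simpa using w)

theorem suffixLevenshtein_length (xs : List α) (ys : List β) :
    (suffixLevenshtein C xs ys).1.length = xs.length + 1 := by
  induction ys with
  | nil =>
    dsimp [suffixLevenshtein]
    induction xs with
    | nil => rfl
    | cons _ xs ih => simp_all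
  | cons y ys ih =>
    dsimp [suffixLevenshtein]
    rw [impl_length]
    exact ih

theorem impl_cons_val (x : α) (xs : List α) (y : β) (D : {r : List δ // 0 < r.length})
    (d₀ d₁ : δ) (ds : List δ) (h : D.1 = d₀ :: d₁ :: ds) :
    (Levenshtein.impl C (x :: xs) y D).1 =
      min (C.delete x + (Levenshtein.impl C xs y ⟨d₁ :: ds, by simp⟩).1[0]'
          (Levenshtein.impl C xs y ⟨d₁ :: ds, by simp⟩).2)
        (min (C.insert y + d₀) (C.substitute x y + d₁)) ::
        (Levenshtein.impl C xs y ⟨d₁ :: ds, by simp⟩).1 := by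
  obtain ⟨l, w⟩ := D
  subst h
  rfl

theorem lev_eq_head (xs : List α) (ys : List β) :
    levenshtein C xs ys = (suffixLevenshtein C xs ys).1[0]'(suffixLevenshtein C xs ys).2 := rfl

theorem suffix_tail' (x : α) (xs : List α) (ys : List β) :
    (suffixLevenshtein C (x :: xs) ys).1.tail = (suffixLevenshtein C xs ys).1 := by
  induction ys with
  | nil => rfl
  | cons y ys ih =>
    show (Levenshtein.impl C (x :: xs) y (suffixLevenshtein C (x :: xs) ys)).1.tail =
      (Levenshtein.impl C xs y (suffixLevenshtein C xs ys)).1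
    generalize suffixLevenshtein C (x :: xs) ys = D at ih ⊢
    generalize suffixLevenshtein C xs ys = E at ih ⊢
    obtain ⟨l, w⟩ := D
    obtain ⟨m, wm⟩ := E
    dsimp only at ih
    subst ih
    match l, w, wm with
    | d₀ :: d₁ :: ds, w, wm =>
      rw [impl_cons_val C x xs y _ d₀ d₁ ds rfl]
      rfl

theorem suffix_tail (x : α) (xs : List α) (ys : List β) :
    (suffixLevenshtein C (x :: xs) ys).1 =
      levenshtein C (x :: xs) ys :: (suffixLevenshtein C xs ys).1 := by
  have := suffix_tail' C x xs ys
  rw [lev_eq_head]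
  generalize suffixLevenshtein C (x :: xs) ys = D at this ⊢
  obtain ⟨_ | ⟨d, l⟩, w⟩ := D
  · simp at w
  · simp at this ⊢
    exact this

theorem levenshtein_nil_cons (y : β) (ys : List β) :
    levenshtein C [] (y :: ys) = C.insert y + levenshtein C [] ys := by
  rw [lev_eq_head, lev_eq_head]
  show (Levenshtein.impl C [] y (suffixLevenshtein C [] ys)).1[0]'(Levenshtein.impl C [] y _).2 = _
  have len := suffixLevenshtein_length C [] ys
  generalize suffixLevenshtein C [] ys = D at len ⊢
  obtain ⟨_ | ⟨d, _ | ⟨_, _⟩⟩, w⟩ := D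
  · simp at w
  · rfl
  · simp at len

theorem levenshtein_cons_nil (x : α) (xs : List α) :
    levenshtein C (x :: xs) [] = C.delete x + levenshtein C xs [] := rfl

theorem levenshtein_cons_cons (x : α) (xs : List α) (y : β) (ys : List β) :
    levenshtein C (x :: xs) (y :: ys) =
      min (C.delete x + levenshtein C xs (y :: ys))
        (min (C.insert y + levenshtein C (x :: xs) ys)
          (C.substitute x y + levenshtein C xs ys)) := by
  have hl := suffixLevenshtein_length C xs ys
  obtain ⟨d₁, ds, hE⟩ : ∃ d₁ ds, (suffixLevenshtein C xs ys).1 = d₁ :: ds := by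
    cases h : (suffixLevenshtein C xs ys).1 with
    | nil => simp [h] at hl
    | cons d ds => exact ⟨d, ds, rfl⟩
  have hv := impl_cons_val C x xs y (suffixLevenshtein C (x :: xs) ys) _ d₁ ds
    (by rw [suffix_tail, hE])
  have h0 : levenshtein C (x :: xs) (y :: ys) =
      (Levenshtein.impl C (x :: xs) y (suffixLevenshtein C (x :: xs) ys)).1[0]'
        (Levenshtein.impl C (x :: xs) y _).2 := rfl
  have hd : levenshtein C xs ys = d₁ := by rw [lev_eq_head]; simp [hE]
  have hI : Levenshtein.impl C xs y ⟨d₁ :: ds, by simp⟩ = suffixLevenshtein C xs (y :: ys) := by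
    show _ = Levenshtein.impl C xs y (suffixLevenshtein C xs ys)
    congr 1
    exact Subtype.ext hE.symm
  rw [h0, hd]
  simp only [hv, List.getElem_cons_zero, hI, ← lev_eq_head]

@[simp] theorem levenshtein_nil_nil : levenshtein C [] [] = 0 := rfl
end LevAux


lemma levRep_nil {A : Type*} [DecidableEq A] (a : A) (θ : ℝ) (n : ℕ) :
    levenshtein (levCost A 1 θ) [] (List.replicate n a) = n := by
  induction n with
  | zero => simp
  | succ n ih => rw [List.replicate_succ, levenshtein_nil_cons, ih]; simp [levCost]; ring

lemma levRep_nil' {A : Type*} [DecidableEq A] (a : A) (θ : ℝ) (m : ℕ) :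
    levenshtein (levCost A 1 θ) (List.replicate m a) [] = m := by
  induction m with
  | zero => simp
  | succ m ih => rw [List.replicate_succ, levenshtein_cons_nil, ih]; simp [levCost]; ring

lemma min3_abs (x : ℝ) : min (1 + |x - 1|) (min (1 + |x + 1|) (0 + |x|)) = |x| := by
  have a1 : |x| ≤ 1 + |x - 1| := by
    have h := abs_add_le (x - 1) 1
    rw [show x - 1 + 1 = x by ring] at h
    simp at h; linarith
  have a2 : |x| ≤ 1 + |x + 1| := by
    have h := abs_add_le (x + 1) (-1)
    rw [show x + 1 + -1 = x by ring] at h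
    simp at h; linarith
  rw [zero_add, min_eq_right a2, min_eq_right a1]

lemma lev_rep {A : Type*} [DecidableEq A] (a : A) (θ : ℝ) (m n : ℕ) :
    lev 1 θ (List.replicate m a) (List.replicate n a) = |(m : ℝ) - n| := by
  induction m generalizing n with
  | zero =>
    rw [lev, List.replicate_zero, levRep_nil]
    rw [abs_of_nonpos] <;> simp
  | succ m ih =>
    induction n with
    | zero =>
      rw [lev, List.replicate_zero, levRep_nil']
      rw [abs_of_nonneg]
      · push_cast; ring
      · push_cast; norm_num; positivity
    | succ n ihn =>
      rw [lev, List.replicate_succ, List.replicate_succ (a := a) (n := n), levenshtein_cons_cons]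
      have h1 : levenshtein (levCost A 1 θ) (List.replicate m a) (a :: List.replicate n a)
          = |((m:ℝ) - n) - 1| := by
        rw [← List.replicate_succ]
        have := ih (n+1); rw [lev] at this; rw [this]; push_cast; ring_nf
      have h2 : levenshtein (levCost A 1 θ) (a :: List.replicate m a) (List.replicate n a)
          = |((m:ℝ) - n) + 1| := by
        rw [← List.replicate_succ]
        have := ihn; rw [lev] at this; rw [this]; push_cast; ring_nf
      have h3 : levenshtein (levCost A 1 θ) (List.replicate m a) (List.replicate n a)
          = |(m:ℝ) - n| := by have := ih n; rwa [lev] at this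
      rw [h1, h2, h3]
      have hsub : (levCost A 1 θ).substitute a a = 0 := by simp [levCost]
      have hdel : (levCost A 1 θ).delete a = 1 := rfl
      have hins : (levCost A 1 θ).insert a = 1 := rfl
      rw [hsub, hdel, hins, min3_abs ((m:ℝ) - n)]
      congr 1
      push_cast
      ring

/-- For a one-letter alphabet `{a}`, any language `L ⊆ {a}*`, and any
`θ ∈ (0, 2]`, the isometry group `Isom_θ(L)` has at most two elements; in particular it is
either trivial or isomorphic to the cyclic group of order 2. -/
theorem stmt_3 {A : Type*} [DecidableEq A] (a : A) (L : Set (List A))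
    (hL : ∀ w ∈ L, ∀ x ∈ w, x = a) (θ : ℝ) (hθ : θ ∈ Set.Ioc (0 : ℝ) 2) :
    (∀ φ ψ χ : IsomGroup (lev 1 θ) L, φ = ψ ∨ φ = χ ∨ ψ = χ) ∧
      (IsomGroup (lev 1 θ) L = ⊥ ∨
        Nonempty (IsomGroup (lev 1 θ) L ≃* Multiplicative (ZMod 2))) := by
  classical
  set ℓ : L → ℝ := fun u => ((u : List A).length : ℝ) with hℓdef
  have repl : ∀ u : L, (u : List A) = List.replicate (u : List A).length a := by
    rintro ⟨u, hu⟩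
    exact List.eq_replicate_length.mpr (hL u hu)
  have key : ∀ φ : Equiv.Perm L, φ ∈ IsomGroup (lev 1 θ) L → ∀ u v : L,
      |ℓ (φ u) - ℓ (φ v)| = |ℓ u - ℓ v| := by
    have dform : ∀ u v : L, lev 1 θ (u : List A) (v : List A) = |ℓ u - ℓ v| := by
      intro u v
      have h := lev_rep a θ (u : List A).length (v : List A).length
      rw [← repl u, ← repl v] at h
      simp only [hℓdef]
      exact h
    intro φ hφ u v
    have hφ' : ∀ u v : L, lev 1 θ ((φ u : L) : List A) ((φ v : L) : List A)
        = lev 1 θ (u : List A) (v : List A) := hφ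
    have h := hφ' u v
    rw [dform, dform] at h
    exact h
  have leninj : ∀ u v : L, ℓ u = ℓ v → u = v := by
    intro u v h
    simp only [hℓdef] at h
    have h' : (u : List A).length = (v : List A).length := by exact_mod_cast h
    exact Subtype.ext (by rw [repl u, repl v, h'])
  by_cases hone : ∀ ψ : Equiv.Perm L, ψ ∈ IsomGroup (lev 1 θ) L → ψ = 1
  · constructor
    · intro φ ψ χ
      left
      exact Subtype.ext ((hone φ.1 φ.2).trans (hone ψ.1 ψ.2).symm)
    · left
      exact (Subgroup.eq_bot_iff_forall _).mpr hone
  · push_neg at hone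
    obtain ⟨g, hgG, hg1⟩ := hone
    have hLne : Nonempty L := by
      by_contra h
      rw [not_nonempty_iff] at h
      exact hg1 (Equiv.ext fun x => (h.false x).elim)
    obtain ⟨p, hp⟩ : ∃ p : L, ∀ u : L, ℓ p ≤ ℓ u := by
      obtain ⟨u₀⟩ := hLne
      have hex : ∃ n, ∃ u : L, (u : List A).length = n := ⟨_, u₀, rfl⟩
      obtain ⟨u, hu⟩ := Nat.find_spec hex
      refine ⟨u, fun v => ?_⟩
      have : Nat.find hex ≤ (v : List A).length := Nat.find_le ⟨v, rfl⟩
      simp only [hℓdef]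
      exact_mod_cast hu ▸ this
    -- dichotomy
    have dichot : ∀ φ : Equiv.Perm L, φ ∈ IsomGroup (lev 1 θ) L →
        (∀ u, ℓ (φ u) - ℓ (φ p) = ℓ u - ℓ p) ∨
        (∀ u, ℓ (φ u) - ℓ (φ p) = -(ℓ u - ℓ p)) := by
      intro φ hφ
      by_cases h : ∀ u, ℓ (φ u) - ℓ (φ p) = ℓ u - ℓ p
      · exact Or.inl h
      push_neg at h
      obtain ⟨x, hx⟩ := h
      have hx1 : ℓ (φ x) - ℓ (φ p) = -(ℓ x - ℓ p) := by
        rcases abs_eq_abs.mp (key φ hφ x p) with h1 | h1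
        · exact absurd h1 hx
        · exact h1
      have hx2 : ℓ x - ℓ p ≠ 0 := by
        intro h0
        exact hx (by rw [hx1, h0]; ring)
      right
      intro y
      rcases abs_eq_abs.mp (key φ hφ y p) with h1 | h1
      · -- positive at y: show ℓ y - ℓ p = 0
        rcases abs_eq_abs.mp (key φ hφ x y) with h2 | h2
        · exact absurd (by linarith) hx2
        · linarith
      · exact h1
    have pos_id : ∀ φ : Equiv.Perm L, φ ∈ IsomGroup (lev 1 θ) L →
        (∀ u, ℓ (φ u) - ℓ (φ p) = ℓ u - ℓ p) → φ = 1 := by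
      intro φ hφ hpos
      have h1 : ℓ p ≤ ℓ (φ p) := hp (φ p)
      have h2 : ℓ p ≤ ℓ (φ⁻¹ p) := hp (φ⁻¹ p)
      have h3 := hpos (φ⁻¹ p)
      rw [show ∀ z, φ (φ⁻¹ z) = z from fun z => φ.apply_symm_apply z] at h3
      apply Equiv.ext
      intro u
      have h4 := hpos u
      have : ℓ (φ u) = ℓ u := by linarith
      rw [Equiv.Perm.one_apply]
      exact leninj _ _ this
    have neg_inv : ∀ φ : Equiv.Perm L,
        (∀ u, ℓ (φ u) - ℓ (φ p) = -(ℓ u - ℓ p)) →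
        (∀ u, ℓ (φ⁻¹ u) - ℓ (φ⁻¹ p) = -(ℓ u - ℓ p)) := by
      intro φ hφ u
      have h1 := hφ (φ⁻¹ u)
      have h2 := hφ (φ⁻¹ p)
      rw [show ∀ z, φ (φ⁻¹ z) = z from fun z => φ.apply_symm_apply z] at h1 h2
      linarith
    have negneg : ∀ φ ψ : Equiv.Perm L,
        (∀ u, ℓ (φ u) - ℓ (φ p) = -(ℓ u - ℓ p)) →
        (∀ u, ℓ (ψ u) - ℓ (ψ p) = -(ℓ u - ℓ p)) →
        (∀ u, ℓ ((φ * ψ) u) - ℓ ((φ * ψ) p) = ℓ u - ℓ p) := by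
      intro φ ψ hφ hψ u
      have h1 := hφ (ψ u)
      have h2 := hφ (ψ p)
      have h3 := hψ u
      simp only [Equiv.Perm.mul_apply]
      linarith
    have neg_eq : ∀ φ ψ : Equiv.Perm L, φ ∈ IsomGroup (lev 1 θ) L →
        ψ ∈ IsomGroup (lev 1 θ) L →
        (∀ u, ℓ (φ u) - ℓ (φ p) = -(ℓ u - ℓ p)) →
        (∀ u, ℓ (ψ u) - ℓ (ψ p) = -(ℓ u - ℓ p)) → φ = ψ := by
      intro φ ψ hφ hψ hφn hψn
      have h1 : φ * ψ⁻¹ = 1 :=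
        pos_id _ (mul_mem hφ (inv_mem hψ)) (negneg φ ψ⁻¹ hφn (neg_inv ψ hψn))
      exact mul_inv_eq_one.mp h1
    have hgneg : ∀ u, ℓ (g u) - ℓ (g p) = -(ℓ u - ℓ p) := by
      rcases dichot g hgG with h | h
      · exact absurd (pos_id g hgG h) hg1
      · exact h
    have toEq : ∀ φ ψ : IsomGroup (lev 1 θ) L,
        ((∀ u, ℓ (φ.1 u) - ℓ (φ.1 p) = ℓ u - ℓ p) ∧
          (∀ u, ℓ (ψ.1 u) - ℓ (ψ.1 p) = ℓ u - ℓ p)) ∨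
        ((∀ u, ℓ (φ.1 u) - ℓ (φ.1 p) = -(ℓ u - ℓ p)) ∧
          (∀ u, ℓ (ψ.1 u) - ℓ (ψ.1 p) = -(ℓ u - ℓ p))) → φ = ψ := by
      rintro φ ψ (⟨h1, h2⟩ | ⟨h1, h2⟩)
      · exact Subtype.ext ((pos_id _ φ.2 h1).trans (pos_id _ ψ.2 h2).symm)
      · exact Subtype.ext (neg_eq _ _ φ.2 ψ.2 h1 h2)
    constructor
    · intro φ ψ χ
      rcases dichot φ.1 φ.2 with h1 | h1 <;> rcases dichot ψ.1 ψ.2 with h2 | h2 <;>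
        rcases dichot χ.1 χ.2 with h3 | h3
      · exact Or.inl (toEq φ ψ (Or.inl ⟨h1, h2⟩))
      · exact Or.inl (toEq φ ψ (Or.inl ⟨h1, h2⟩))
      · exact Or.inr (Or.inl (toEq φ χ (Or.inl ⟨h1, h3⟩)))
      · exact Or.inr (Or.inr (toEq ψ χ (Or.inr ⟨h2, h3⟩)))
      · exact Or.inr (Or.inr (toEq ψ χ (Or.inl ⟨h2, h3⟩)))
      · exact Or.inr (Or.inl (toEq φ χ (Or.inr ⟨h1, h3⟩)))
      · exact Or.inl (toEq φ ψ (Or.inr ⟨h1, h2⟩))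
      · exact Or.inl (toEq φ ψ (Or.inr ⟨h1, h2⟩))
    · right
      set gG : IsomGroup (lev 1 θ) L := ⟨g, hgG⟩ with hgGdef
      have hgg : gG * gG = 1 := by
        apply Subtype.ext
        exact pos_id _ (mul_mem hgG hgG) (negneg g g hgneg hgneg)
      have hcls : ∀ h : IsomGroup (lev 1 θ) L, h = 1 ∨ h = gG := by
        intro h
        rcases dichot h.1 h.2 with hh | hh
        · exact Or.inl (Subtype.ext (pos_id h.1 h.2 hh))
        · exact Or.inr (Subtype.ext (neg_eq h.1 g h.2 hgG hh hgneg))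
      have hgne : gG ≠ 1 := fun h => hg1 (congrArg Subtype.val h)
      have hz : (Multiplicative.ofAdd (1 : ZMod 2)) ≠ 1 := by decide
      refine ⟨⟨⟨fun h => if h = 1 then 1 else Multiplicative.ofAdd 1,
        fun z => if z = 1 then 1 else gG, ?_, ?_⟩, ?_⟩⟩
      · intro h
        rcases hcls h with rfl | rfl
        · simp
        · simp [hgne, hz]
      · intro z
        have : z = 1 ∨ z = Multiplicative.ofAdd 1 := by
          revert z; decide
        rcases this with rfl | rfl
        · simp
        · simp [hgne, hz]
      · intro x y
        rcases hcls x with rfl | rfl <;> rcases hcls y with rfl | rfl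
        · simp
        · simp [hgne]
        · simp [hgne]
        · simp only [hgg, hgne, if_pos rfl, if_neg hgne]
          decide
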